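/- Let M be a d×n integer matrix of full row rank d all of whose d×d minors lie in {-1,0,1} (a unimodular matrix). Then the Lebesgue volume of the zonotope Z(M) equals the number of subsets B ⊆ {1,…,n} of cardinality d such that the columns of M indexed by B are linearly independent, i.e., vol Z(M) equals the number of bases of the regular matroid represented by M. -/

import Mathlib

open MeasureTheory

/-- The zonotope generated by a `d × n` real matrix: the image of the unit cube
`[0,1]^n` under the linear map `x ↦ M x`. -/
def zonotope {d n : ℕ} (M : Matrix (Fin d) (Fin n) ℝ) : Set (Fin d → ℝ) :=
  {y | ∃ x : Fin n → ℝ, (∀ i, x i ∈ Set.Icc (0 : ℝ) 1) ∧ y = M.mulVec x}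

open Set Matrix
open scoped Pointwise

namespace ZP
variable {d n D m : ℕ}

lemma zonotope_eq (M : Matrix (Fin d) (Fin n) ℝ) :
    zonotope M = M.mulVecLin '' (univ.pi fun _ => Icc (0:ℝ) 1) := by
  ext y
  simp only [zonotope, mem_setOf_eq, mem_image, mem_pi, mem_univ, forall_true_left,
    Matrix.mulVecLin_apply]
  constructor
  · rintro ⟨x, hx, rfl⟩; exact ⟨x, hx, rfl⟩
  · rintro ⟨x, hx, rfl⟩; exact ⟨x, hx, rfl⟩

lemma isCompact_zonotope (M : Matrix (Fin d) (Fin n) ℝ) : IsCompact (zonotope M) := by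
  rw [zonotope_eq]
  exact ((isCompact_univ_pi fun _ => isCompact_Icc).image
    (LinearMap.continuous_of_finiteDimensional _))

lemma convex_zonotope (M : Matrix (Fin d) (Fin n) ℝ) : Convex ℝ (zonotope M) := by
  rw [zonotope_eq]
  exact (convex_pi fun _ _ => convex_Icc 0 1).linear_image _

lemma measurableSet_zonotope (M : Matrix (Fin d) (Fin n) ℝ) : MeasurableSet (zonotope M) :=
  (isCompact_zonotope M).isClosed.measurableSet

def basesSet (M : Matrix (Fin d) (Fin n) ℝ) : Set (Finset (Fin n)) :=
  {B | B.card = d ∧ LinearIndependent ℝ (fun j : B => fun i => M i j)}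

lemma vol_rank_lt (M : Matrix (Fin d) (Fin n) ℝ) (h : M.rank < d) :
    volume (zonotope M) = 0 := by
  have hsub : zonotope M ⊆ (LinearMap.range M.mulVecLin : Submodule ℝ (Fin d → ℝ)) := by
    rw [zonotope_eq]; rintro y ⟨x, -, rfl⟩; exact LinearMap.mem_range_self _ x
  have hne : LinearMap.range M.mulVecLin ≠ ⊤ := by
    intro htop
    rw [Matrix.rank] at h
    rw [htop] at h
    simp [finrank_top] at h
  exact measure_mono_null hsub (Measure.addHaar_submodule _ _ hne)

lemma basesSet_rank_lt (M : Matrix (Fin d) (Fin n) ℝ) (h : M.rank < d) :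
    basesSet M = ∅ := by
  ext B
  simp only [basesSet, mem_setOf_eq, mem_empty_iff_false, iff_false, not_and]
  intro hcard hli
  have hsub : ∀ b : B, (fun i => M i b) ∈ LinearMap.range M.mulVecLin := by
    intro b
    exact ⟨Pi.single (b : Fin n) 1, by ext i; simp [Matrix.mulVecLin_apply, Matrix.mulVec_single]⟩
  have hli' : LinearIndependent ℝ (fun b : B =>
      (⟨(fun i => M i b), hsub b⟩ : LinearMap.range M.mulVecLin)) := by
    apply LinearIndependent.of_comp (LinearMap.range M.mulVecLin).subtype
    exact hli
  have := hli'.fintype_card_le_finrank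
  rw [Fintype.card_coe, hcard] at this
  rw [Matrix.rank] at h
  omega


def eL (d : ℕ) : Fin (d+1) → ℝ := Pi.single (Fin.last d) 1

lemma eL_last : eL d (Fin.last d) = 1 := by simp [eL]

lemma eL_castSucc (i : Fin d) : eL d i.castSucc = 0 := by
  refine Pi.single_eq_of_ne ?_ 1
  simp [Fin.ext_iff]
  omega

def snc (w : Fin d → ℝ) (t : ℝ) : Fin (d+1) → ℝ := Fin.snoc w t

@[simp] lemma snc_last (w : Fin d → ℝ) (t : ℝ) : snc w t (Fin.last d) = t := by
  simp [snc]

@[simp] lemma snc_castSucc (w : Fin d → ℝ) (t : ℝ) (i : Fin d) :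
    snc w t i.castSucc = w i := by simp [snc]

/-- projection dropping the last coordinate -/
def proj (d : ℕ) (y : Fin (d+1) → ℝ) (i : Fin d) : ℝ := y i.castSucc

lemma snc_proj (k : Fin (d+1) → ℝ) : snc (proj d k) (k (Fin.last d)) = k := by
  funext i
  induction i using Fin.lastCases with
  | last => simp
  | cast i => simp [proj]

lemma snc_add_smul_eL (w : Fin d → ℝ) (t s : ℝ) :
    snc w t + s • eL d = snc w (t + s) := by
  funext i
  induction i using Fin.lastCases with
  | last => simp [eL_last]
  | cast i => simp [eL_castSucc]

/-- the section of a set over `w` in the last coordinate -/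
def sec (S : Set (Fin (d+1) → ℝ)) (w : Fin d → ℝ) : Set ℝ := {t | snc w t ∈ S}

lemma volume_eq_lintegral_sec (S : Set (Fin (d+1) → ℝ)) (hS : MeasurableSet S) :
    volume S = ∫⁻ w, volume (sec S w) := by
  have hmp := volume_preserving_piFinSuccAbove (fun _ : Fin (d+1) => ℝ) (Fin.last d)
  set e := MeasurableEquiv.piFinSuccAbove (fun _ : Fin (d+1) => ℝ) (Fin.last d) with he
  have h1 : volume S = volume (e.symm ⁻¹' S) := by
    rw [hmp.symm e |>.measure_preimage hS.nullMeasurableSet]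
  rw [h1, Measure.volume_eq_prod, Measure.prod_apply_symm (e.symm.measurable hS)]
  congr 1
  funext w
  congr 1
  ext t
  simp only [mem_preimage, sec, mem_setOf_eq]
  rw [MeasurableEquiv.piFinSuccAbove_symm_apply]
  simp [Fin.insertNthEquiv, Fin.insertNth_last', snc]

lemma sec_convex {K : Set (Fin (d+1) → ℝ)} (hc : Convex ℝ K) (w : Fin d → ℝ) :
    Convex ℝ (sec K w) := by
  have : sec K w = (AffineMap.lineMap (snc w 0) (snc w 0 + eL d)) ⁻¹' K := by
    ext t
    simp only [sec, mem_setOf_eq, mem_preimage, AffineMap.lineMap_apply, vadd_eq_add, vsub_eq_sub,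
      add_sub_cancel_left]
    rw [show t • eL d + snc w 0 = snc w t by rw [add_comm (t • eL d) (snc w 0), snc_add_smul_eL]; norm_num]
  rw [this]
  exact hc.affine_preimage _

lemma sec_eq_Icc {K : Set (Fin (d+1) → ℝ)} (hK : IsCompact K) (hc : Convex ℝ K)
    (w : Fin d → ℝ) (hne : (sec K w).Nonempty) :
    sec K w = Icc (sInf (sec K w)) (sSup (sec K w)) ∧ sInf (sec K w) ≤ sSup (sec K w) := by
  have hclosed : IsClosed (sec K w) := by
    have : Continuous (fun t : ℝ => snc w t) := by
      apply continuous_pi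
      intro i
      induction i using Fin.lastCases with
      | last => simpa using continuous_id'
      | cast i => simpa using continuous_const
    exact hK.isClosed.preimage this
  have hbdd : Bornology.IsBounded (sec K w) := by
    obtain ⟨C, hC⟩ := isBounded_iff_forall_norm_le.1 hK.isBounded
    apply (Metric.isBounded_Icc (-C) C).subset
    intro t ht
    have h1 : ‖snc w t (Fin.last d)‖ ≤ C :=
      le_trans (norm_le_pi_norm _ _) (hC _ ht)
    simp only [snc_last, Real.norm_eq_abs] at h1
    exact ⟨neg_le_of_abs_le h1, le_of_abs_le h1⟩
  have hcomp : IsCompact (sec K w) := Metric.isCompact_of_isClosed_isBounded hclosed hbdd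
  have hbb := hbdd.bddBelow
  have hba := hbdd.bddAbove
  refine ⟨?_, csInf_le_csSup hne hbb hba⟩
  apply Subset.antisymm
  · intro t ht; exact ⟨csInf_le hbb ht, le_csSup hba ht⟩
  · exact ((sec_convex hc w).ordConnected).out (hcomp.sInf_mem hne) (hcomp.sSup_mem hne)

lemma vol_add_seg (K : Set (Fin (d+1) → ℝ)) (hK : IsCompact K) (hc : Convex ℝ K) :
    volume {y | ∃ k ∈ K, ∃ t ∈ Icc (0:ℝ) 1, y = k + t • eL d}
      = volume K + volume (proj d '' K) := by
  set KS : Set (Fin (d+1) → ℝ) :=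
    {y | ∃ k ∈ K, ∃ t ∈ Icc (0:ℝ) 1, y = k + t • eL d} with hKS
  have hKScomp : IsCompact KS := by
    have : KS = (fun p : (Fin (d+1) → ℝ) × ℝ => p.1 + p.2 • eL d) ''
        (K ×ˢ Icc (0:ℝ) 1) := by
      ext y
      simp only [hKS, mem_setOf_eq, mem_image, mem_prod, Prod.exists]
      constructor
      · rintro ⟨k, hk, t, ht, rfl⟩; exact ⟨k, t, ⟨hk, ht⟩, rfl⟩
      · rintro ⟨k, t, ⟨hk, ht⟩, rfl⟩; exact ⟨k, hk, t, ht, rfl⟩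
    rw [this]
    exact (hK.prod isCompact_Icc).image (by fun_prop)
  have hprojcomp : IsCompact (proj d '' K) := by
    apply hK.image
    exact continuous_pi fun i => continuous_apply _
  have hsecKS : ∀ w, sec KS w = sec K w + Icc (0:ℝ) 1 := by
    intro w
    ext t
    simp only [sec, hKS, mem_setOf_eq, Set.mem_add]
    constructor
    · rintro ⟨k, hk, s, hs, hsnoc⟩
      refine ⟨t - s, ?_, s, hs, by ring⟩
      have hk2 : k = snc w (t - s) := by
        have h3 := snc_add_smul_eL w (t-s) s
        rw [show t - s + s = t by ring] at h3
        rw [← h3] at hsnoc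
        exact (add_right_cancel hsnoc).symm
      show snc w (t-s) ∈ K
      rw [← hk2]; exact hk
    · rintro ⟨a, ha, s, hs, rfl⟩
      exact ⟨snc w a, ha, s, hs, (snc_add_smul_eL w a s).symm⟩
  have hmemproj : ∀ w, w ∈ proj d '' K ↔ (sec K w).Nonempty := by
    intro w
    constructor
    · rintro ⟨k, hk, rfl⟩
      refine ⟨k (Fin.last d), ?_⟩
      show snc (proj d k) _ ∈ K
      rw [snc_proj]; exact hk
    · rintro ⟨t, ht⟩
      refine ⟨snc w t, ht, ?_⟩
      funext i
      simp [proj]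
  have hpoint : ∀ w, volume (sec KS w)
      = volume (sec K w) + (proj d '' K).indicator (fun _ => (1:ENNReal)) w := by
    intro w
    by_cases hne : (sec K w).Nonempty
    · obtain ⟨hicc, hle⟩ := sec_eq_Icc hK hc w hne
      rw [hsecKS w, hicc, Set.Icc_add_Icc hle zero_le_one, Real.volume_Icc, Real.volume_Icc,
        indicator_of_mem ((hmemproj w).2 hne)]
      rw [← ENNReal.ofReal_one, ← ENNReal.ofReal_add (by linarith) zero_le_one]
      congr 1
      ring
    · rw [not_nonempty_iff_eq_empty] at hne
      rw [hsecKS w, hne, Set.empty_add, indicator_of_notMem]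
      · simp
      · rw [hmemproj w, hne]; simp
  rw [volume_eq_lintegral_sec KS hKScomp.isClosed.measurableSet,
    volume_eq_lintegral_sec K hK.isClosed.measurableSet]
  calc ∫⁻ w, volume (sec KS w)
      = ∫⁻ w, (volume (sec K w) + (proj d '' K).indicator (fun _ => (1:ENNReal)) w) := by
        congr 1; funext w; exact hpoint w
    _ = (∫⁻ w, volume (sec K w)) + ∫⁻ w, (proj d '' K).indicator (fun _ => (1:ENNReal)) w := by
        rw [lintegral_add_right]
        exact measurable_const.indicator hprojcomp.isClosed.measurableSet
    _ = (∫⁻ w, volume (sec K w)) + volume (proj d '' K) := by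
        congr 1
        have := lintegral_indicator_one (μ := volume) hprojcomp.isClosed.measurableSet
        simpa [Pi.one_def] using this


lemma li_map (M : Matrix (Fin d) (Fin m) ℝ) (N : Matrix (Fin d) (Fin n) ℝ)
    (f : Fin n ↪ Fin m) (h : ∀ i j, N i j = M i (f j)) (B : Finset (Fin n)) :
    LinearIndependent ℝ (fun j : (B.map f) => fun i => M i j) ↔
      LinearIndependent ℝ (fun j : B => fun i => N i j) := by
  let e : {x // x ∈ B} ≃ {x // x ∈ B.map f} :=
    Equiv.ofBijective (fun j => ⟨f j, Finset.mem_map_of_mem f j.2⟩)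
      ⟨by
        intro a b hab
        apply Subtype.ext
        exact f.injective (by simpa using hab),
       by
        rintro ⟨x, hx⟩
        obtain ⟨y, hy, rfl⟩ := Finset.mem_map.1 hx
        exact ⟨⟨y, hy⟩, rfl⟩⟩
  have hcomp : (fun j : (B.map f) => fun i => M i j) ∘ e = fun j : B => fun i => N i j := by
    funext j; funext i
    show M i (f j) = N i j
    exact (h i j).symm
  exact (linearIndependent_equiv' e hcomp).symm

/-- the key li lemma for contraction -/
lemma li_option (κ : Type*) [Fintype κ] (v : κ → (Fin (D+1) → ℝ)) :
    LinearIndependent ℝ (fun o : Option κ => o.elim (eL D) v) ↔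
      LinearIndependent ℝ (fun k => proj D (v k)) := by
  set P : (Fin (D+1) → ℝ) →ₗ[ℝ] (Fin D → ℝ) := LinearMap.funLeft ℝ ℝ Fin.castSucc with hP
  have hPapp : ∀ y, P y = proj D y := fun y => rfl
  have hPeL : P (eL D) = 0 := by
    funext i
    simp only [hP, LinearMap.funLeft_apply, Function.comp, Pi.zero_apply]
    exact eL_castSucc i
  constructor
  · intro h
    rw [Fintype.linearIndependent_iff] at h ⊢
    intro g hg
    set c : ℝ := ∑ k, g k * (v k (Fin.last D)) with hc
    have key : ∑ o : Option κ, (fun o : Option κ => o.elim (-c) g) o • (fun o : Option κ => o.elim (eL D) v) o = 0 := by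
      rw [Fintype.sum_option]
      funext i
      simp only [Option.elim, Pi.add_apply, Finset.sum_apply, Pi.smul_apply, smul_eq_mul,
        Pi.zero_apply]
      induction i using Fin.lastCases with
      | last =>
        simp only [eL_last, mul_one]
        rw [hc]
        exact neg_add_cancel _
      | cast i =>
        simp only [eL_castSucc, mul_zero, zero_add]
        have := congrFun hg i
        simpa [proj] using this
    intro k
    have := h _ key (some k)
    simpa using this
  · intro h
    rw [Fintype.linearIndependent_iff] at h ⊢
    intro G hG
    have hproj : ∑ k, G (some k) • proj D (v k) = 0 := by
      have := congrArg P hG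
      rw [map_sum, map_zero] at this
      rw [Fintype.sum_option] at this
      simp only [Option.elim] at this
      rw [_root_.map_smul, hPeL, smul_zero, zero_add] at this
      simpa [← hPapp] using this
    have hzero : ∀ k, G (some k) = 0 := h _ hproj
    have hnone : G none = 0 := by
      have h2 := congrFun hG (Fin.last D)
      rw [Fintype.sum_option] at h2
      simp only [Option.elim, Finset.sum_apply, Pi.smul_apply, Pi.add_apply, smul_eq_mul,
        Pi.zero_apply] at h2
      rw [eL_last] at h2
      simp only [hzero, zero_mul, Finset.sum_const_zero, add_zero, mul_one] at h2
      exact h2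
    intro o
    cases o with
    | none => exact hnone
    | some k => exact hzero k

lemma li_contract (M : Matrix (Fin (D+1)) (Fin (n+1)) ℝ)
    (hlast : ∀ i, M i (Fin.last n) = eL D i) (B : Finset (Fin n)) :
    LinearIndependent ℝ
      (fun j : (insert (Fin.last n) (B.map Fin.castSuccEmb) : Finset (Fin (n+1))) =>
        fun i => M i j)
      ↔ LinearIndependent ℝ
          (fun j : B => fun i => (M.submatrix Fin.castSucc Fin.castSucc) i j) := by
  set S : Finset (Fin (n+1)) := insert (Fin.last n) (B.map Fin.castSuccEmb) with hS
  let e : Option {x // x ∈ B} ≃ {x // x ∈ S} :=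
    Equiv.ofBijective
      (fun o => o.elim ⟨Fin.last n, Finset.mem_insert_self _ _⟩
        (fun b => ⟨(b : Fin n).castSucc,
          Finset.mem_insert_of_mem (Finset.mem_map_of_mem _ b.2)⟩))
      ⟨by
        intro o o' hoo
        match o, o' with
        | none, none => rfl
        | none, some b =>
          exact absurd (congrArg Subtype.val hoo).symm (Fin.castSucc_lt_last _).ne
        | some b, none =>
          exact absurd (congrArg Subtype.val hoo) (Fin.castSucc_lt_last _).ne
        | some b, some b' =>
          have := congrArg Subtype.val hoo
          simp only [Option.elim] at this
          exact congrArg some (Subtype.ext (Fin.castSucc_injective _ this)),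
       by
        rintro ⟨x, hx⟩
        rcases Finset.mem_insert.1 hx with h | h
        · exact ⟨none, by simp [h]⟩
        · obtain ⟨y, hy, rfl⟩ := Finset.mem_map.1 h
          exact ⟨some ⟨y, hy⟩, rfl⟩⟩
  have hcomp : (fun j : S => fun i => M i j) ∘ e
      = fun o : Option {x // x ∈ B} => o.elim (eL D) (fun b => fun i => M i (b : Fin n).castSucc) := by
    funext o
    match o with
    | none =>
      funext i
      exact hlast i
    | some b => rfl
  have h1 := linearIndependent_equiv' (R := ℝ) e hcomp
  exact h1.symm.trans (li_option {x // x ∈ B} (fun b => fun i => M i (b : Fin n).castSucc))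

lemma li_congr_finset (M : Matrix (Fin d) (Fin n) ℝ) {B₁ B₂ : Finset (Fin n)} (h : B₁ = B₂) :
    LinearIndependent ℝ (fun j : B₁ => fun i => M i j) ↔
      LinearIndependent ℝ (fun j : B₂ => fun i => M i j) := by
  subst h
  rfl

lemma basesSet_split (M : Matrix (Fin (D+1)) (Fin (n+1)) ℝ)
    (hlast : ∀ i, M i (Fin.last n) = eL D i) :
    (basesSet M).ncard = (basesSet (M.submatrix id Fin.castSucc)).ncard
      + (basesSet (M.submatrix Fin.castSucc Fin.castSucc)).ncard := by
  classical
  set A := {B ∈ basesSet M | Fin.last n ∉ B} with hA'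
  set C := {B ∈ basesSet M | Fin.last n ∈ B} with hC'
  have hun : basesSet M = A ∪ C := by
    ext B
    by_cases h : Fin.last n ∈ B <;> simp [hA', hC', h]
  have hdisj : Disjoint A C := by
    rw [Set.disjoint_left]
    rintro B ⟨-, h1⟩ ⟨-, h2⟩
    exact h1 h2
  have hA : A = (fun B : Finset (Fin n) => B.map Fin.castSuccEmb) '' basesSet (M.submatrix id Fin.castSucc) := by
    ext B
    constructor
    · rintro ⟨⟨hcard, hli⟩, hnot⟩
      set B' := Finset.filter (fun j : Fin n => j.castSucc ∈ B) Finset.univ with hB'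
      have hmap : B'.map Fin.castSuccEmb = B := by
        ext j
        simp only [Finset.mem_map, hB', Finset.mem_filter, Finset.mem_univ, true_and]
        constructor
        · rintro ⟨a, ha, rfl⟩; exact ha
        · intro hj
          have hne : j ≠ Fin.last n := fun h => hnot (h ▸ hj)
          obtain ⟨a, rfl⟩ := Fin.exists_castSucc_eq.2 hne
          exact ⟨a, hj, rfl⟩
      refine ⟨B', ⟨?_, ?_⟩, hmap⟩
      · have := Finset.card_map (s := B') Fin.castSuccEmb
        rw [hmap] at this
        omega
      · rw [← li_map M (M.submatrix id Fin.castSucc) Fin.castSuccEmb (fun i j => rfl) B']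
        exact (li_congr_finset M hmap).2 hli
    · rintro ⟨B', ⟨hcard, hli⟩, rfl⟩
      refine ⟨⟨by simpa using hcard,
        (li_map M (M.submatrix id Fin.castSucc) Fin.castSuccEmb (fun i j => rfl) B').2 hli⟩, ?_⟩
      simp only [Finset.mem_map]
      rintro ⟨a, ha, hmm⟩
      exact absurd hmm (Fin.castSucc_lt_last _).ne
  have hC : C = (fun B : Finset (Fin n) => insert (Fin.last n) (B.map Fin.castSuccEmb)) ''
      basesSet (M.submatrix Fin.castSucc Fin.castSucc) := by
    ext B
    constructor
    · rintro ⟨⟨hcard, hli⟩, hmem⟩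
      set B' := Finset.filter (fun j : Fin n => j.castSucc ∈ B) Finset.univ with hB'
      have hmap : insert (Fin.last n) (B'.map Fin.castSuccEmb) = B := by
        ext j
        simp only [Finset.mem_insert, Finset.mem_map, hB', Finset.mem_filter, Finset.mem_univ,
          true_and]
        constructor
        · rintro (rfl | ⟨a, ha, rfl⟩)
          · exact hmem
          · exact ha
        · intro hj
          by_cases hne : j = Fin.last n
          · exact Or.inl hne
          · obtain ⟨a, rfl⟩ := Fin.exists_castSucc_eq.2 hne
            exact Or.inr ⟨a, hj, rfl⟩
      have hnotmem : Fin.last n ∉ B'.map Fin.castSuccEmb := by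
        simp only [Finset.mem_map]
        rintro ⟨a, ha, hmm⟩
        exact absurd hmm (Fin.castSucc_lt_last _).ne
      refine ⟨B', ⟨?_, ?_⟩, hmap⟩
      · have h1 : (insert (Fin.last n) (B'.map Fin.castSuccEmb)).card
            = (B'.map Fin.castSuccEmb).card + 1 := Finset.card_insert_of_notMem hnotmem
        rw [hmap] at h1
        rw [Finset.card_map] at h1
        omega
      · rw [← li_contract M hlast B']
        exact (li_congr_finset M hmap).2 hli
    · rintro ⟨B', ⟨hcard, hli⟩, rfl⟩
      have hnotmem : Fin.last n ∉ B'.map Fin.castSuccEmb := by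
        simp only [Finset.mem_map]
        rintro ⟨a, ha, hmm⟩
        exact absurd hmm (Fin.castSucc_lt_last _).ne
      refine ⟨⟨?_, (li_contract M hlast B').2 hli⟩, Finset.mem_insert_self _ _⟩
      rw [Finset.card_insert_of_notMem hnotmem, Finset.card_map, hcard]
  rw [hun, Set.ncard_union_eq hdisj (Set.toFinite _) (Set.toFinite _), hA, hC,
    Set.ncard_image_of_injective _ (Finset.map_injective Fin.castSuccEmb),
    Set.ncard_image_of_injective]
  intro B1 B2 h12
  have h3 : Fin.last n ∉ B1.map Fin.castSuccEmb := by
    simp only [Finset.mem_map]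
    rintro ⟨a, ha, hmm⟩
    exact absurd hmm (Fin.castSucc_lt_last _).ne
  have h4 : Fin.last n ∉ B2.map Fin.castSuccEmb := by
    simp only [Finset.mem_map]
    rintro ⟨a, ha, hmm⟩
    exact absurd hmm (Fin.castSucc_lt_last _).ne
  have h5 := congrArg (fun s => Finset.erase s (Fin.last n)) h12
  simp only at h5
  rw [Finset.erase_insert h3, Finset.erase_insert h4] at h5
  exact Finset.map_injective _ h5


lemma bases_nolast_eq_image (M : Matrix (Fin d) (Fin (n+1)) ℝ) :
    {B ∈ basesSet M | Fin.last n ∉ B}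
      = (fun B : Finset (Fin n) => B.map Fin.castSuccEmb) ''
          basesSet (M.submatrix id Fin.castSucc) := by
  classical
  ext B
  constructor
  · rintro ⟨⟨hcard, hli⟩, hnot⟩
    set B' := Finset.filter (fun j : Fin n => j.castSucc ∈ B) Finset.univ with hB'
    have hmap : B'.map Fin.castSuccEmb = B := by
      ext j
      simp only [Finset.mem_map, hB', Finset.mem_filter, Finset.mem_univ, true_and]
      constructor
      · rintro ⟨a, ha, rfl⟩; exact ha
      · intro hj
        have hne : j ≠ Fin.last n := fun h => hnot (h ▸ hj)
        obtain ⟨a, rfl⟩ := Fin.exists_castSucc_eq.2 hne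
        exact ⟨a, hj, rfl⟩
    refine ⟨B', ⟨?_, ?_⟩, hmap⟩
    · have := Finset.card_map (s := B') Fin.castSuccEmb
      rw [hmap] at this
      omega
    · rw [← li_map M (M.submatrix id Fin.castSucc) Fin.castSuccEmb (fun i j => rfl) B']
      exact (li_congr_finset M hmap).2 hli
  · rintro ⟨B', ⟨hcard, hli⟩, rfl⟩
    refine ⟨⟨by simpa using hcard,
      (li_map M (M.submatrix id Fin.castSucc) Fin.castSuccEmb (fun i j => rfl) B').2 hli⟩, ?_⟩
    simp only [Finset.mem_map]
    rintro ⟨a, ha, hmm⟩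
    exact absurd hmm (Fin.castSucc_lt_last _).ne

lemma basesSet_zero_col (M : Matrix (Fin d) (Fin (n+1)) ℝ)
    (hv : (fun i => M i (Fin.last n)) = 0) :
    ((basesSet M).ncard : ENNReal) = ((basesSet (M.submatrix id Fin.castSucc)).ncard : ENNReal) := by
  have hnolast : ∀ B ∈ basesSet M, Fin.last n ∉ B := by
    rintro B ⟨hcard, hli⟩ hmem
    exact hli.ne_zero ⟨Fin.last n, hmem⟩ hv
  have hsep : basesSet M = {B ∈ basesSet M | Fin.last n ∉ B} := by
    ext B
    exact ⟨fun h => ⟨h, hnolast B h⟩, fun h => h.1⟩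
  rw [hsep, bases_nolast_eq_image,
    Set.ncard_image_of_injective _ (Finset.map_injective Fin.castSuccEmb)]

-- mulVec splitting
lemma mulVec_split (M : Matrix (Fin d) (Fin (n+1)) ℝ) (x : Fin (n+1) → ℝ) :
    M.mulVec x = (M.submatrix id Fin.castSucc).mulVec (x ∘ Fin.castSucc)
      + x (Fin.last n) • (fun i => M i (Fin.last n)) := by
  funext i
  simp only [Matrix.mulVec, dotProduct, Fin.sum_univ_castSucc, Pi.add_apply,
    Pi.smul_apply, smul_eq_mul, Matrix.submatrix_apply, id_eq, Function.comp_apply]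
  ring

lemma zonotope_succ (M : Matrix (Fin d) (Fin (n+1)) ℝ) :
    zonotope M = {y | ∃ k ∈ zonotope (M.submatrix id Fin.castSucc),
      ∃ t ∈ Icc (0:ℝ) 1, y = k + t • (fun i => M i (Fin.last n))} := by
  ext y
  constructor
  · rintro ⟨x, hx, rfl⟩
    refine ⟨(M.submatrix id Fin.castSucc).mulVec (x ∘ Fin.castSucc),
      ⟨x ∘ Fin.castSucc, fun i => hx _, rfl⟩, x (Fin.last n), hx _, ?_⟩
    exact mulVec_split M x
  · rintro ⟨k, ⟨x', hx', rfl⟩, t, ht, rfl⟩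
    refine ⟨Fin.snoc x' t, ?_, ?_⟩
    · intro i
      induction i using Fin.lastCases with
      | last => simpa using ht
      | cast i => simpa using hx' i
    · rw [mulVec_split M (Fin.snoc x' t)]
      congr 1
      · congr 1
        funext j
        simp
      · simp
  -- done

lemma zonotope_zero_col (M : Matrix (Fin d) (Fin (n+1)) ℝ)
    (hv : (fun i => M i (Fin.last n)) = 0) :
    zonotope M = zonotope (M.submatrix id Fin.castSucc) := by
  rw [zonotope_succ M, hv]
  ext y
  simp only [mem_setOf_eq, smul_zero, add_zero]
  constructor
  · rintro ⟨k, hk, t, ht, rfl⟩; exact hk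
  · intro hy; exact ⟨y, hy, 0, by simp, rfl⟩

lemma proj_zonotope (M : Matrix (Fin (D+1)) (Fin n) ℝ) :
    proj D '' zonotope M = zonotope (M.submatrix Fin.castSucc id) := by
  ext w
  constructor
  · rintro ⟨y, ⟨x, hx, rfl⟩, rfl⟩
    exact ⟨x, hx, rfl⟩
  · rintro ⟨x, hx, rfl⟩
    exact ⟨M.mulVec x, ⟨x, hx, rfl⟩, rfl⟩

lemma range_top_of_rank (M : Matrix (Fin d) (Fin n) ℝ) (h : M.rank = d) :
    LinearMap.range M.mulVecLin = ⊤ := by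
  apply Submodule.eq_top_of_finrank_eq
  rw [Matrix.rank] at h
  rw [h, Module.finrank_fin_fun]

lemma rank_of_range_top (M : Matrix (Fin d) (Fin n) ℝ)
    (h : LinearMap.range M.mulVecLin = ⊤) : M.rank = d := by
  rw [Matrix.rank, h, finrank_top, Module.finrank_fin_fun]

lemma rank_del_zero_col (M : Matrix (Fin d) (Fin (n+1)) ℝ)
    (hv : (fun i => M i (Fin.last n)) = 0) (h : M.rank = d) :
    (M.submatrix id Fin.castSucc).rank = d := by
  apply rank_of_range_top
  rw [← range_top_of_rank M h]
  apply le_antisymm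
  · rintro y ⟨x', rfl⟩
    refine ⟨Fin.snoc x' 0, ?_⟩
    rw [Matrix.mulVecLin_apply, Matrix.mulVecLin_apply, mulVec_split M, hv]
    simp only [smul_zero, add_zero]
    congr 1
    funext j
    simp
  · rintro y ⟨x, rfl⟩
    refine ⟨x ∘ Fin.castSucc, ?_⟩
    rw [Matrix.mulVecLin_apply, Matrix.mulVecLin_apply, mulVec_split M, hv]
    simp

lemma rank_contract (M : Matrix (Fin (D+1)) (Fin (n+1)) ℝ) (h : M.rank = D+1)
    (hlast : ∀ i, M i (Fin.last n) = eL D i) :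
    (M.submatrix Fin.castSucc Fin.castSucc).rank = D := by
  apply rank_of_range_top
  rw [Submodule.eq_top_iff']
  intro w
  have htop := range_top_of_rank M h
  have : (Fin.snoc w 0 : Fin (D+1) → ℝ) ∈ LinearMap.range M.mulVecLin := by
    rw [htop]; trivial
  obtain ⟨x, hx⟩ := this
  refine ⟨x ∘ Fin.castSucc, ?_⟩
  funext i
  have h1 : M.mulVec x i.castSucc = w i := by
    rw [Matrix.mulVecLin_apply] at hx
    rw [hx]
    simp
  rw [Matrix.mulVecLin_apply]
  rw [← h1]
  simp only [Matrix.mulVec, dotProduct, Matrix.submatrix_apply, Function.comp_apply,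
    Fin.sum_univ_castSucc (n := n)]
  rw [hlast i.castSucc, eL_castSucc]
  ring

-- minors of deletion
lemma minors_del (M : Matrix (Fin d) (Fin (n+1)) ℝ)
    (huni : ∀ f : Fin d → Fin (n+1), Function.Injective f →
      (M.submatrix id f).det ∈ ({-1, 0, 1} : Set ℝ))
    (f : Fin d → Fin n) (hf : Function.Injective f) :
    ((M.submatrix id Fin.castSucc).submatrix id f).det ∈ ({-1, 0, 1} : Set ℝ) := by
  rw [Matrix.submatrix_submatrix]
  exact huni (Fin.castSucc ∘ f) ((Fin.castSucc_injective n).comp hf)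

-- minors of contraction
lemma minors_contract (M : Matrix (Fin (D+1)) (Fin (n+1)) ℝ)
    (hlast : ∀ i, M i (Fin.last n) = eL D i)
    (huni : ∀ f : Fin (D+1) → Fin (n+1), Function.Injective f →
      (M.submatrix id f).det ∈ ({-1, 0, 1} : Set ℝ))
    (f : Fin D → Fin n) (hf : Function.Injective f) :
    ((M.submatrix Fin.castSucc Fin.castSucc).submatrix id f).det ∈ ({-1, 0, 1} : Set ℝ) := by
  set g : Fin (D+1) → Fin (n+1) := Fin.snoc (fun k => (f k).castSucc) (Fin.last n) with hg
  have hginj : Function.Injective g := by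
    intro a b hab
    induction a using Fin.lastCases with
    | last =>
      induction b using Fin.lastCases with
      | last => rfl
      | cast b =>
        rw [hg] at hab
        simp only [Fin.snoc_last, Fin.snoc_castSucc] at hab
        exact absurd hab.symm (Fin.castSucc_lt_last _).ne
    | cast a =>
      induction b using Fin.lastCases with
      | last =>
        rw [hg] at hab
        simp only [Fin.snoc_last, Fin.snoc_castSucc] at hab
        exact absurd hab (Fin.castSucc_lt_last _).ne
      | cast b =>
        rw [hg] at hab
        simp only [Fin.snoc_castSucc] at hab
        exact congrArg Fin.castSucc (hf (Fin.castSucc_injective _ hab))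
  have hdet : (M.submatrix id g).det
      = ((M.submatrix Fin.castSucc Fin.castSucc).submatrix id f).det := by
    set A := M.submatrix id g with hA
    rw [Matrix.det_succ_column A (Fin.last D)]
    have hcol : ∀ i, A i (Fin.last D) = eL D i := by
      intro i
      rw [hA]
      simp only [Matrix.submatrix_apply, id_eq, hg, Fin.snoc_last]
      exact hlast i
    rw [Finset.sum_eq_single (Fin.last D)]
    · rw [hcol, eL_last]
      have hsub : A.submatrix (Fin.last D).succAbove (Fin.last D).succAbove
          = (M.submatrix Fin.castSucc Fin.castSucc).submatrix id f := by
        ext i j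
        simp only [Matrix.submatrix_apply, Fin.succAbove_last, hA, hg, id_eq, Fin.snoc_castSucc]
      rw [hsub]
      have : (-1 : ℝ) ^ ((Fin.last D : ℕ) + (Fin.last D : ℕ)) = 1 := by
        apply Even.neg_one_pow
        exact ⟨D, by simp [Fin.val_last]⟩
      rw [this]
      ring
    · intro i _ hi
      have : A i (Fin.last D) = 0 := by
        rw [hcol]
        obtain ⟨i', rfl⟩ := Fin.exists_castSucc_eq.2 hi
        exact eL_castSucc i'
      rw [this]
      ring
    · intro h; exact absurd (Finset.mem_univ _) h
  rw [← hdet]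
  exact huni g hginj


lemma zonotope_mul (W : Matrix (Fin d) (Fin d) ℝ) (M : Matrix (Fin d) (Fin n) ℝ) :
    zonotope (W * M) = W.mulVecLin '' zonotope M := by
  ext y
  constructor
  · rintro ⟨x, hx, rfl⟩
    exact ⟨M.mulVec x, ⟨x, hx, rfl⟩, by rw [Matrix.mulVecLin_apply, Matrix.mulVec_mulVec]⟩
  · rintro ⟨z, ⟨x, hx, rfl⟩, rfl⟩
    exact ⟨x, hx, by rw [Matrix.mulVecLin_apply, Matrix.mulVec_mulVec]⟩

lemma volume_zonotope_mul (W : Matrix (Fin d) (Fin d) ℝ) (M : Matrix (Fin d) (Fin n) ℝ)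
    (hW : |W.det| = 1) :
    volume (zonotope (W * M)) = volume (zonotope M) := by
  rw [zonotope_mul]
  have := Measure.addHaar_image_linearMap (μ := (volume : Measure (Fin d → ℝ)))
    W.mulVecLin (zonotope M)
  rw [this]
  have hdet : LinearMap.det W.mulVecLin = W.det := by
    rw [← Matrix.toLin'_apply']
    exact LinearMap.det_toLin' W
  rw [hdet, hW]
  simp

lemma basesSet_mul (W : Matrix (Fin d) (Fin d) ℝ) (M : Matrix (Fin d) (Fin n) ℝ)
    (hW : IsUnit W.det) :
    basesSet (W * M) = basesSet M := by
  have hker : LinearMap.ker W.mulVecLin = ⊥ := by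
    rw [LinearMap.ker_eq_bot]
    exact Matrix.mulVec_injective_iff_isUnit.2 ((Matrix.isUnit_iff_isUnit_det W).2 hW)
  ext B
  simp only [basesSet, mem_setOf_eq, and_congr_right_iff]
  intro hcard
  have hcomp : (fun j : B => fun i => (W * M) i j)
      = W.mulVecLin ∘ (fun j : B => fun i => M i j) := by
    funext j
    funext i
    simp [Matrix.mul_apply, Matrix.mulVecLin_apply, Matrix.mulVec, dotProduct]
  rw [hcomp]
  exact LinearMap.linearIndependent_iff W.mulVecLin hker

lemma exists_W (M : Matrix (Fin (D+1)) (Fin (n+1)) ℝ) (hrank : M.rank = D+1)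
    (hv : (fun i => M i (Fin.last n)) ≠ 0)
    (huni : ∀ f : Fin (D+1) → Fin (n+1), Function.Injective f →
      (M.submatrix id f).det ∈ ({-1, 0, 1} : Set ℝ)) :
    ∃ W : Matrix (Fin (D+1)) (Fin (D+1)) ℝ, |W.det| = 1 ∧ IsUnit W.det ∧
      (∀ i, (W * M) i (Fin.last n) = eL D i) := by
  classical
  set col : Fin (n+1) → (Fin (D+1) → ℝ) := fun j i => M i j with hcol
  set v : Fin (D+1) → ℝ := fun i => M i (Fin.last n) with hvdef
  have hvmem : v ∈ Set.range col := ⟨Fin.last n, rfl⟩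
  have htop : Submodule.span ℝ (Set.range col) = ⊤ := by
    have h0 : Set.range col = Set.range M.col := rfl
    rw [h0, ← Matrix.range_mulVecLin]
    apply Submodule.eq_top_of_finrank_eq
    rw [Matrix.rank] at hrank
    rw [hrank, Module.finrank_fin_fun]
  have hsing : LinearIndepOn ℝ id ({v} : Set (Fin (D+1) → ℝ)) :=
    (linearIndepOn_singleton_iff ℝ).2 hv
  have hsub : ({v} : Set (Fin (D+1) → ℝ)) ⊆ Set.range col := singleton_subset_iff.2 hvmem
  set b := hsing.extend hsub with hb
  have hbsub : b ⊆ Set.range col := hsing.extend_subset hsub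
  have hvb : v ∈ b := hsing.subset_extend hsub rfl
  have hbli : LinearIndependent ℝ (fun x => x : b → (Fin (D+1) → ℝ)) :=
    hsing.linearIndepOn_extend hsub
  have hbspan : Submodule.span ℝ b = ⊤ := by
    rw [hsing.span_extend_eq_span hsub, htop]
  -- basis
  let bb : Module.Basis b ℝ (Fin (D+1) → ℝ) := Module.Basis.mk hbli
    (by rw [Subtype.range_coe]; rw [hbspan])
  have : Fintype b := FiniteDimensional.fintypeBasisIndex bb
  have hcard : Fintype.card b = D + 1 := by
    have h1 := Module.finrank_eq_card_basis bb
    rw [Module.finrank_fin_fun] at h1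
    omega
  let e0 : Fin (D+1) ≃ b := (Fintype.equivFinOfCardEq hcard).symm
  let e : Fin (D+1) ≃ b := (Equiv.swap (Fin.last D) (e0.symm ⟨v, hvb⟩)).trans e0
  have helast : (e (Fin.last D) : Fin (D+1) → ℝ) = v := by
    show (e0 (Equiv.swap (Fin.last D) (e0.symm ⟨v, hvb⟩) (Fin.last D)) : Fin (D+1) → ℝ) = v
    rw [Equiv.swap_apply_left, Equiv.apply_symm_apply]
  -- choose column indices
  have hchoice : ∀ u : b, ∃ j : Fin (n+1), col j = (u : Fin (D+1) → ℝ) := fun u => hbsub u.2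
  let idx : b → Fin (n+1) := fun u =>
    if h : (u : Fin (D+1) → ℝ) = v then Fin.last n else Classical.choose (hchoice u)
  have hidx : ∀ u : b, col (idx u) = (u : Fin (D+1) → ℝ) := by
    intro u
    by_cases h : (u : Fin (D+1) → ℝ) = v
    · simp only [idx, dif_pos h]
      rw [h]
    · simp only [idx, dif_neg h]
      exact Classical.choose_spec (hchoice u)
  set f : Fin (D+1) → Fin (n+1) := fun k => idx (e k) with hf
  have hfinj : Function.Injective f := by
    intro a c hac
    have h1 : col (f a) = col (f c) := by rw [hac]
    rw [hf] at h1
    simp only at h1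
    rw [hidx (e a), hidx (e c)] at h1
    exact e.injective (Subtype.ext h1)
  set A := M.submatrix id f with hA
  have hAcol : ∀ k, (fun i => A i k) = (e k : Fin (D+1) → ℝ) := by
    intro k
    funext i
    rw [hA]
    simp only [Matrix.submatrix_apply, id_eq]
    have := congrFun (hidx (e k)) i
    exact this
  have hAli : LinearIndependent ℝ (fun k => Aᵀ k) := by
    have h1 : (fun k => Aᵀ k) = (fun x => x : b → (Fin (D+1) → ℝ)) ∘ e := by
      funext k
      exact hAcol k
    rw [h1]
    exact hbli.comp e e.injective
  have hAunit : IsUnit A := Matrix.linearIndependent_cols_iff_isUnit.1 hAli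
  have hAdet : IsUnit A.det := (Matrix.isUnit_iff_isUnit_det A).1 hAunit
  have hAdet1 : |A.det| = 1 := by
    rcases huni f hfinj with h | h | h
    · rw [hA] at *; rw [h]; simp
    · exfalso; rw [hA] at *; rw [h] at hAdet; simp at hAdet
    · rw [hA] at *; rw [h]; simp
  refine ⟨A⁻¹, ?_, ?_, ?_⟩
  · rw [Matrix.det_nonsing_inv, Ring.inverse_eq_inv', abs_inv, hAdet1]
    norm_num
  · rw [Matrix.det_nonsing_inv, Ring.inverse_eq_inv']
    simpa using hAdet
  · intro i
    have hW : A⁻¹ * A = 1 := Matrix.nonsing_inv_mul A hAdet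
    have h1 : (A⁻¹ * M) i (Fin.last n) = (A⁻¹ * A) i (Fin.last D) := by
      simp only [Matrix.mul_apply]
      congr 1
      funext k
      congr 1
      have := congrFun (hAcol (Fin.last D)) k
      rw [this, helast]
    rw [h1, hW]
    rw [Matrix.one_apply]
    rw [eL]
    rw [Pi.single_apply]


lemma d0_case {n : ℕ} (M : Matrix (Fin 0) (Fin n) ℝ) :
    volume (zonotope M) = ((basesSet M).ncard : ENNReal) := by
  have hz : zonotope M = univ := by
    apply eq_univ_of_forall
    intro y
    exact ⟨0, fun i => by simp, Subsingleton.elim _ _⟩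
  have hb : basesSet M = {∅} := by
    ext B
    simp only [basesSet, mem_setOf_eq, mem_singleton_iff, Finset.card_eq_zero]
    constructor
    · rintro ⟨h, -⟩; exact h
    · rintro rfl
      refine ⟨rfl, ?_⟩
      haveI : IsEmpty ((∅ : Finset (Fin n)) : Type) :=
        ⟨fun x => (Finset.notMem_empty _ x.2)⟩
      exact linearIndependent_empty_type
  rw [hz, hb, Set.ncard_singleton]
  rw [MeasureTheory.volume_pi, Measure.pi_univ]
  simp

lemma key : ∀ (n d : ℕ) (M : Matrix (Fin d) (Fin n) ℝ), M.rank = d →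
    (∀ f : Fin d → Fin n, Function.Injective f →
      (M.submatrix id f).det ∈ ({-1, 0, 1} : Set ℝ)) →
    volume (zonotope M) = ((basesSet M).ncard : ENNReal) := by
  intro n
  induction n with
  | zero =>
    intro d M hrank huni
    have hd : d = 0 := by
      have h1 := M.rank_le_card_width
      simp only [Fintype.card_fin] at h1
      omega
    subst hd
    exact d0_case M
  | succ n IH =>
    intro d M hrank huni
    rcases d with _ | D
    · exact d0_case M
    by_cases hv0 : (fun i => M i (Fin.last n)) = 0
    · -- last column is zero
      have h1 : zonotope M = zonotope (M.submatrix id Fin.castSucc) := zonotope_zero_col M hv0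
      have h2 : (M.submatrix id Fin.castSucc).rank = D+1 := rank_del_zero_col M hv0 hrank
      have h3 := IH (D+1) (M.submatrix id Fin.castSucc) h2 (minors_del M huni)
      rw [h1, h3, basesSet_zero_col M hv0]
    · obtain ⟨W, hWabs, hWunit, hWcol⟩ := exists_W M hrank hv0 huni
      set N := W * M with hN
      have hNrank : N.rank = D+1 := by
        rw [hN, Matrix.rank_mul_eq_right_of_isUnit_det W M hWunit, hrank]
      have hWsign : W.det = 1 ∨ W.det = -1 := (abs_eq (by norm_num : (0:ℝ) ≤ 1)).1 hWabs
      have hNuni : ∀ f : Fin (D+1) → Fin (n+1), Function.Injective f →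
          (N.submatrix id f).det ∈ ({-1, 0, 1} : Set ℝ) := by
        intro f hf
        have hsub : (N.submatrix id f) = W * (M.submatrix id f) := by
          rw [hN, Matrix.submatrix_mul W M id id f Function.bijective_id]
          congr 1
        rw [hsub, Matrix.det_mul]
        rcases huni f hf with h | h | h <;> rcases hWsign with h' | h' <;>
          rw [h, h'] <;> norm_num [Set.mem_insert_iff]
      have hNlast : ∀ i, N i (Fin.last n) = eL D i := hWcol
      have hNdel_sub : (N.submatrix id Fin.castSucc).submatrix Fin.castSucc id
          = N.submatrix Fin.castSucc Fin.castSucc := by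
        rw [Matrix.submatrix_submatrix]
        congr 1
      have hdecomp : zonotope N = {y | ∃ k ∈ zonotope (N.submatrix id Fin.castSucc),
          ∃ t ∈ Icc (0:ℝ) 1, y = k + t • eL D} := by
        rw [zonotope_succ N]
        have hcl : (fun i => N i (Fin.last n)) = eL D := funext hNlast
        rw [hcl]
      have hvol : volume (zonotope N) = volume (zonotope (N.submatrix id Fin.castSucc))
          + volume (proj D '' zonotope (N.submatrix id Fin.castSucc)) := by
        rw [hdecomp]
        exact vol_add_seg _ (isCompact_zonotope _) (convex_zonotope _)
      rw [proj_zonotope, hNdel_sub] at hvol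
      have hdelvol : volume (zonotope (N.submatrix id Fin.castSucc))
          = ((basesSet (N.submatrix id Fin.castSucc)).ncard : ENNReal) := by
        by_cases hr : (N.submatrix id Fin.castSucc).rank = D+1
        · exact IH _ _ hr (minors_del N hNuni)
        · have hle : (N.submatrix id Fin.castSucc).rank ≤ D+1 := by
            have := (N.submatrix id Fin.castSucc).rank_le_card_height
            simpa using this
          have hlt : (N.submatrix id Fin.castSucc).rank < D+1 := lt_of_le_of_ne hle hr
          rw [vol_rank_lt _ hlt, basesSet_rank_lt _ hlt]
          simp
      have hcvol : volume (zonotope (N.submatrix Fin.castSucc Fin.castSucc))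
          = ((basesSet (N.submatrix Fin.castSucc Fin.castSucc)).ncard : ENNReal) :=
        IH _ _ (rank_contract N hNrank hNlast) (minors_contract N hNlast hNuni)
      have hvolN : volume (zonotope N) = ((basesSet N).ncard : ENNReal) := by
        rw [hvol, hdelvol, hcvol, basesSet_split N hNlast]
        push_cast
        ring
      have hvolT : volume (zonotope N) = volume (zonotope M) := volume_zonotope_mul W M hWabs
      have hbT : basesSet N = basesSet M := basesSet_mul W M hWunit
      rw [← hvolT, hvolN, hbT]

end ZP

/-- For a full row rank unimodular integer matrix `M`, the Lebesgue volume of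
the zonotope `Z(M)` equals the number of bases of the regular matroid
represented by `M`, i.e. the number of `d`-element sets of column indices whose
columns are linearly independent. -/
theorem stmt3 (d n : ℕ) (M : Matrix (Fin d) (Fin n) ℝ)
    (hint : ∀ i j, ∃ z : ℤ, M i j = (z : ℝ))
    (hrank : M.rank = d)
    (huni : ∀ f : Fin d → Fin n, Function.Injective f →
      (M.submatrix id f).det ∈ ({-1, 0, 1} : Set ℝ)) :
    volume (zonotope M) =
      ({B : Finset (Fin n) | B.card = d ∧
        LinearIndependent ℝ (fun j : B => fun i => M i j)}.ncard : ENNReal) := by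
  exact ZP.key n d M hrank huni
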